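/- Let ρ > 0. For every x ∈ ℝⁿ₊ with ‖x‖₂ ≤ √(2/ρ), the zero vector belongs to prox_{(1/ρ)h₁}(x). -/
import Mathlib


/-- The ℓ₁ norm on `ℝⁿ`. -/
noncomputable def l1norm {n : ℕ} (x : Fin n → ℝ) : ℝ := ∑ i, |x i|

/-- The ℓ₂ norm on `ℝⁿ`. -/
noncomputable def l2norm {n : ℕ} (x : Fin n → ℝ) : ℝ := Real.sqrt (∑ i, (x i) ^ 2)

-- `h₁(x) = ‖x‖₁/‖x‖₂` for `x ≠ 0`, and `h₁(0) = 0`.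
open Classical in
noncomputable def h1 {n : ℕ} (x : Fin n → ℝ) : ℝ :=
  if x = 0 then 0 else l1norm x / l2norm x

/-- `prox_{(1/ρ) f}(z)`: the set of global minimizers of `(ρ/2)‖u - z‖₂² + f(u)`. -/
noncomputable def proxSet {n : ℕ} (ρ : ℝ) (f : (Fin n → ℝ) → ℝ) (z : Fin n → ℝ) :
    Set (Fin n → ℝ) :=
  {u | ∀ v : Fin n → ℝ,
    ρ / 2 * (∑ i, (u i - z i) ^ 2) + f u ≤ ρ / 2 * (∑ i, (v i - z i) ^ 2) + f v}

theorem stmt_14 {n : ℕ} (ρ : ℝ) (hρ : 0 < ρ) (x : Fin n → ℝ)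
    (hx : ∀ i, 0 ≤ x i) (hnorm : l2norm x ≤ Real.sqrt (2 / ρ)) :
    (0 : Fin n → ℝ) ∈ proxSet ρ h1 x := by
  intro v
  by_cases hv : v = 0
  · subst hv; simp
  · have h0 : h1 (0 : Fin n → ℝ) = 0 := by simp [h1]
    have hv1 : h1 v = l1norm v / l2norm v := by simp [h1, hv]
    rw [h0, hv1]
    set S := ∑ i, (v i) ^ 2 with hS
    set A := ∑ i, (x i) ^ 2 with hA
    set P := ∑ i, v i * x i with hP
    have hSnn : 0 ≤ S := Finset.sum_nonneg fun i _ => sq_nonneg _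
    have hAnn : 0 ≤ A := Finset.sum_nonneg fun i _ => sq_nonneg _
    have hSpos : 0 < S := by
      rcases Function.ne_iff.mp hv with ⟨i, hi⟩
      have h2 : 0 < (v i) ^ 2 := by
        have := sq_abs (v i)
        nlinarith [abs_pos.mpr hi, abs_nonneg (v i)]
      rw [hS]
      exact lt_of_lt_of_le h2 (Finset.single_le_sum (f := fun j => (v j)^2)
        (fun j _ => sq_nonneg _) (Finset.mem_univ i))
    have hl2pos : 0 < l2norm v := Real.sqrt_pos.mpr hSpos
    -- l2 ≤ l1
    have hl2le : l2norm v ≤ l1norm v := by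
      rw [l2norm, l1norm]
      have h1' : S ≤ (∑ i, |v i|) ^ 2 := by
        have := Finset.sum_sq_le_sq_sum_of_nonneg (s := Finset.univ)
          (f := fun i => |v i|) (fun i _ => abs_nonneg _)
        simpa [sq_abs] using this
      calc Real.sqrt S ≤ Real.sqrt ((∑ i, |v i|) ^ 2) := Real.sqrt_le_sqrt h1'
        _ = ∑ i, |v i| := Real.sqrt_sq (Finset.sum_nonneg fun i _ => abs_nonneg _)
    have hone : (1 : ℝ) ≤ l1norm v / l2norm v :=
      (one_le_div hl2pos).mpr hl2le
    -- Cauchy-Schwarz: P ≤ √S * √A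
    have hcs : P ≤ Real.sqrt S * Real.sqrt A := by
      have h2 : P ^ 2 ≤ S * A := Finset.sum_mul_sq_le_sq_mul_sq _ _ _
      calc P ≤ |P| := le_abs_self _
        _ = Real.sqrt (P ^ 2) := (Real.sqrt_sq_eq_abs P).symm
        _ ≤ Real.sqrt (S * A) := Real.sqrt_le_sqrt h2
        _ = Real.sqrt S * Real.sqrt A := Real.sqrt_mul hSnn _
    -- 2 √S √A - S ≤ A
    have hkey : 2 * P - S ≤ A := by
      nlinarith [sq_nonneg (Real.sqrt S - Real.sqrt A), Real.sq_sqrt hSnn,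
        Real.sq_sqrt hAnn]
    -- ρ/2 * A ≤ 1
    have hA2 : A ≤ 2 / ρ := by
      have : Real.sqrt A ≤ Real.sqrt (2 / ρ) := hnorm
      nlinarith [Real.sq_sqrt hAnn, Real.sq_sqrt (le_of_lt (div_pos two_pos hρ)),
        Real.sqrt_nonneg A, Real.sqrt_nonneg (2/ρ), hnorm,
        mul_self_le_mul_self (Real.sqrt_nonneg A) hnorm]
    have hρA : ρ / 2 * A ≤ 1 := by
      rw [div_mul_eq_mul_div, mul_comm]
      rw [div_le_one two_pos]
      calc A * ρ ≤ (2 / ρ) * ρ := by nlinarith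
        _ = 2 := by field_simp
    -- expand sums
    have hexp : ∑ i, (v i - x i) ^ 2 = S - 2 * P + A := by
      simp only [hS, hA, hP, sub_sq, Finset.sum_add_distrib, Finset.sum_sub_distrib,
        Finset.mul_sum]
      ring_nf
    have hexp0 : ∑ i, ((0 : Fin n → ℝ) i - x i) ^ 2 = A := by
      simp [hA]
    rw [hexp, hexp0]
    have : ρ / 2 * (2 * P - S) ≤ 1 := by
      calc ρ / 2 * (2 * P - S) ≤ ρ / 2 * A := by
            apply mul_le_mul_of_nonneg_left hkey; positivity
        _ ≤ 1 := hρA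
    nlinarith [this, hone]
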